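/- Assume (A1), (A2), (A4), and (B1)–(B3), and assume in addition that X⁺ is a Hilbert space whose scalar product satisfies ⟨u,u⟩ = ‖u‖² for all u ∈ X⁺. Then assumption (A5) holds: for every u ∈ X∖X̃ there exists a point m̂(u) ∈ X̂(u)∖{0} which is a critical point of the restriction of J to X(u) (i.e. J'(m̂(u))[z] = 0 for all z ∈ X(u)), m̂(u) is the unique such critical point in X̂(u)∖{0}, and m̂(u) is the unique global maximum of J restricted to X̂(u). -/

import Mathlib

open Filter Topology


open TopologicalSpace NormedSpace
open scoped RealInnerProductSpace

lemma aux_separation {X : Type*} [NormedAddCommGroup X] [NormedSpace ℝ X]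
    (Y : Submodule ℝ X) (hY : IsClosed (Y : Set X)) {x : X} (hx : x ∉ Y) :
    ∃ φ : X →L[ℝ] ℝ, (∀ y ∈ Y, φ y = 0) ∧ φ x ≠ 0 := by
  haveI : IsClosed (Y : Set X) := hY
  have hx0 : (Submodule.Quotient.mk x : X ⧸ Y) ≠ 0 := by
    simpa [Submodule.Quotient.mk_eq_zero] using hx
  obtain ⟨g, hg1, hgx⟩ := exists_dual_vector ℝ (Submodule.Quotient.mk x : X ⧸ Y) (norm_ne_zero_iff.mpr hx0)
  let q : X →L[ℝ] X ⧸ Y :=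
    LinearMap.mkContinuous Y.mkQ 1 (fun m => by
      simpa using Submodule.Quotient.norm_mk_le Y m)
  refine ⟨g.comp q, fun y hy => ?_, ?_⟩
  · have : q y = 0 := by
      simp only [q, LinearMap.mkContinuous_apply, Submodule.mkQ_apply]
      simpa [Submodule.Quotient.mk_eq_zero] using hy
    simp [this]
  · have : q x = Submodule.Quotient.mk x := by
      simp [q]
    simp only [ContinuousLinearMap.comp_apply, this, hgx]
    exact norm_ne_zero_iff.mpr hx0

lemma aux_sep_of_dual_sep {X : Type*} [NormedAddCommGroup X] [NormedSpace ℝ X]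
    [SeparableSpace (StrongDual ℝ X)] : SeparableSpace X := by
  haveI : Nonempty (StrongDual ℝ X) := ⟨0⟩
  obtain ⟨φ, hφ⟩ := exists_dense_seq (StrongDual ℝ X)
  have H : ∀ n, ∃ z : X, ‖z‖ ≤ 1 ∧ (φ n ≠ 0 → ‖φ n‖ / 2 < ‖(φ n) z‖) := by
    intro n
    by_cases h : φ n = 0
    · exact ⟨0, by simp, fun h' => absurd h h'⟩
    · have hpos : 0 < ‖φ n‖ := norm_pos_iff.mpr h
      obtain ⟨z, hz1, hz2⟩ := (φ n).exists_lt_apply_of_lt_opNorm (r := ‖φ n‖ / 2) (by linarith)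
      exact ⟨z, hz1.le, fun _ => hz2⟩
  choose x hx1 hx2 using H
  set Z := (Submodule.span ℝ (Set.range x)).topologicalClosure with hZ
  have hZtop : Z = ⊤ := by
    by_contra h
    obtain ⟨w, hw⟩ : ∃ w : X, w ∉ Z := by
      by_contra h'
      push_neg at h'
      exact h (Submodule.eq_top_iff'.mpr h')
    obtain ⟨ψ, hψZ, hψw⟩ := aux_separation Z (Submodule.isClosed_topologicalClosure _) hw
    have hψ0 : ψ ≠ 0 := fun h => hψw (by simp [h])
    have hψn : (0:ℝ) < ‖ψ‖ := norm_pos_iff.mpr hψ0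
    obtain ⟨n, hn⟩ := hφ.exists_dist_lt ψ (by positivity : (0:ℝ) < ‖ψ‖ / 3)
    have hnorm3 : ‖φ n - ψ‖ < ‖ψ‖ / 3 := by
      rw [norm_sub_rev]; rwa [dist_eq_norm] at hn
    have hφn : ‖ψ‖ - ‖ψ‖/3 ≤ ‖φ n‖ := by
      have : ‖ψ‖ ≤ ‖φ n‖ + ‖φ n - ψ‖ := by
        have h0 : φ n - (φ n - ψ) = ψ := by abel
        calc ‖ψ‖ = ‖φ n - (φ n - ψ)‖ := by rw [h0]
          _ ≤ ‖φ n‖ + ‖φ n - ψ‖ := norm_sub_le _ _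
      linarith
    have hφn0 : φ n ≠ 0 := by
      intro h0
      rw [h0] at hφn
      simp at hφn
      linarith
    have hlt := hx2 n hφn0
    have hzx : ψ (x n) = 0 :=
      hψZ _ ((Submodule.le_topologicalClosure _) (Submodule.subset_span ⟨n, rfl⟩))
    have : ‖(φ n) (x n)‖ ≤ ‖φ n - ψ‖ := by
      calc ‖(φ n) (x n)‖ = ‖(φ n - ψ) (x n)‖ := by simp [hzx]
        _ ≤ ‖φ n - ψ‖ * ‖x n‖ := (φ n - ψ).le_opNorm _
        _ ≤ ‖φ n - ψ‖ * 1 := by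
            exact mul_le_mul_of_nonneg_left (hx1 n) (norm_nonneg _)
        _ = ‖φ n - ψ‖ := mul_one _
    linarith
  have hsep : IsSeparable (Z : Set X) := by
    rw [Submodule.topologicalClosure_coe]
    exact ((Set.countable_range x).isSeparable.span).closure
  rw [hZtop] at hsep
  rw [Submodule.top_coe] at hsep
  exact isSeparable_univ_iff.mp hsep

lemma aux_subspace_reflexive {X : Type*} [NormedAddCommGroup X] [NormedSpace ℝ X]
    (hrefl : Function.Surjective (inclusionInDoubleDual ℝ X))
    (Y : Submodule ℝ X) (hY : IsClosed (Y : Set X)) :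
    Function.Surjective (inclusionInDoubleDual ℝ ↥Y) := by
  intro Ξ
  let ρ : StrongDual ℝ X →L[ℝ] StrongDual ℝ ↥Y := (ContinuousLinearMap.compL ℝ ↥Y X ℝ).flip Y.subtypeL
  have hρ : ∀ (φ : StrongDual ℝ X) (z : Y), ρ φ z = φ z := fun φ z => rfl
  obtain ⟨v, hv⟩ := hrefl (Ξ.comp ρ)
  have hvφ : ∀ φ : StrongDual ℝ X, φ v = Ξ (ρ φ) := by
    intro φ
    have := congrFun (congrArg DFunLike.coe hv) φ
    simpa [NormedSpace.inclusionInDoubleDual, NormedSpace.dual_def] using this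
  have hvY : v ∈ Y := by
    by_contra hvY
    obtain ⟨φ, hφY, hφv⟩ := aux_separation Y hY hvY
    have h0 : ρ φ = 0 := ContinuousLinearMap.ext fun z => by
      simpa [hρ] using hφY z z.2
    exact hφv (by rw [hvφ φ, h0, map_zero])
  refine ⟨⟨v, hvY⟩, ?_⟩
  apply ContinuousLinearMap.ext
  intro ψ
  obtain ⟨φ, hφext, -⟩ := exists_extension_norm_eq Y ψ
  have hρψ : ρ φ = ψ := ContinuousLinearMap.ext fun z => by simpa [hρ] using hφext z
  have h1 : (inclusionInDoubleDual ℝ ↥Y ⟨v, hvY⟩) ψ = ψ ⟨v, hvY⟩ := rfl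
  rw [h1]
  calc ψ ⟨v, hvY⟩ = ρ φ ⟨v, hvY⟩ := by rw [hρψ]
    _ = φ v := rfl
    _ = Ξ (ρ φ) := hvφ φ
    _ = Ξ ψ := by rw [hρψ]

lemma aux_wsc {X : Type*} [NormedAddCommGroup X] [NormedSpace ℝ X] [CompleteSpace X]
    (hrefl : Function.Surjective (inclusionInDoubleDual ℝ X))
    (y : ℕ → X) (C : ℝ) (hC : 0 ≤ C) (hb : ∀ n, ‖y n‖ ≤ C) :
    ∃ σ : ℕ → ℕ, StrictMono σ ∧ ∃ v : X,
      v ∈ (Submodule.span ℝ (Set.range y)).topologicalClosure ∧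
      ∀ φ : X →L[ℝ] ℝ, Tendsto (fun n => φ (y (σ n))) atTop (𝓝 (φ v)) := by
  set Y := (Submodule.span ℝ (Set.range y)).topologicalClosure with hYdef
  have hYc : IsClosed (Y : Set X) := Submodule.isClosed_topologicalClosure _
  haveI : CompleteSpace ↥Y := hYc.completeSpace_coe
  haveI : SeparableSpace ↥Y := by
    have h1 : IsSeparable (Y : Set X) := by
      rw [hYdef, Submodule.topologicalClosure_coe]
      exact ((Set.countable_range y).isSeparable.span).closure
    exact h1.separableSpace
  have hYrefl := aux_subspace_reflexive hrefl Y hYc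
  haveI : SeparableSpace (StrongDual ℝ (StrongDual ℝ ↥Y)) :=
    (Function.Surjective.denseRange hYrefl).separableSpace
      (inclusionInDoubleDual ℝ ↥Y).continuous
  haveI : SeparableSpace (StrongDual ℝ ↥Y) := aux_sep_of_dual_sep (X := StrongDual ℝ ↥Y)
  haveI : Nonempty (StrongDual ℝ ↥Y) := ⟨0⟩
  obtain ⟨ψ, hψ⟩ := exists_dense_seq (StrongDual ℝ ↥Y)
  have hymem : ∀ n, y n ∈ Y := fun n =>
    (Submodule.le_topologicalClosure _) (Submodule.subset_span ⟨n, rfl⟩)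
  set yy : ℕ → ↥Y := fun n => ⟨y n, hymem n⟩ with hyydef
  have hyynorm : ∀ n, ‖yy n‖ ≤ C := fun n => hb n
  have hcpt : IsCompact (Set.univ.pi fun k : ℕ => Set.Icc (-(‖ψ k‖ * C)) (‖ψ k‖ * C)) :=
    isCompact_univ_pi fun k => isCompact_Icc
  have hFmem : ∀ n, (fun k => ψ k (yy n)) ∈
      Set.univ.pi fun k => Set.Icc (-(‖ψ k‖ * C)) (‖ψ k‖ * C) := by
    intro n k _
    have h1 : ‖ψ k (yy n)‖ ≤ ‖ψ k‖ * C :=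
      le_trans ((ψ k).le_opNorm _) (mul_le_mul_of_nonneg_left (hyynorm n) (norm_nonneg _))
    rw [Real.norm_eq_abs] at h1
    constructor
    · linarith [neg_abs_le (ψ k (yy n))]
    · linarith [le_abs_self (ψ k (yy n))]
  obtain ⟨L, hL, σ, hσmono, hσconv⟩ := hcpt.tendsto_subseq hFmem
  have hcoord : ∀ k, Tendsto (fun n => ψ k (yy (σ n))) atTop (𝓝 (L k)) := by
    intro k
    have := tendsto_pi_nhds.mp hσconv k
    simpa [Function.comp] using this
  have hCauchy : ∀ ψ' : StrongDual ℝ ↥Y, ∃ l : ℝ, Tendsto (fun n => ψ' (yy (σ n))) atTop (𝓝 l) := by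
    intro ψ'
    apply cauchySeq_tendsto_of_complete
    rw [Metric.cauchySeq_iff]
    intro ε hε
    obtain ⟨k, hk⟩ := hψ.exists_dist_lt ψ' (show (0:ℝ) < ε / (4 * (C + 1)) by positivity)
    have hkn : ‖ψ' - ψ k‖ < ε / (4 * (C + 1)) := by
      exact (dist_eq_norm ψ' (ψ k)).symm.trans_lt hk
    have hcs := (hcoord k).cauchySeq
    rw [Metric.cauchySeq_iff] at hcs
    obtain ⟨N, hN⟩ := hcs (ε / 2) (by positivity)
    refine ⟨N, fun m hm n hn => ?_⟩
    have key : ∀ j, |ψ' (yy (σ j)) - ψ k (yy (σ j))| ≤ ε / (4 * (C + 1)) * C := by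
      intro j
      have h2 : ‖(ψ' - ψ k) (yy (σ j))‖ ≤ ‖ψ' - ψ k‖ * C :=
        le_trans ((ψ' - ψ k).le_opNorm _)
          (mul_le_mul_of_nonneg_left (hyynorm _) (norm_nonneg _))
      have h3 : ‖ψ' - ψ k‖ * C ≤ ε / (4 * (C + 1)) * C :=
        mul_le_mul_of_nonneg_right hkn.le hC
      simpa [ContinuousLinearMap.sub_apply, Real.norm_eq_abs] using le_trans h2 h3
    have hd := hN m hm n hn
    rw [Real.dist_eq] at hd ⊢
    have hfrac : ε / (4 * (C + 1)) * C ≤ ε / 4 := by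
      rw [div_mul_eq_mul_div, div_le_div_iff₀ (by positivity) (by norm_num)]
      nlinarith
    have t0 := abs_sub_le (ψ' (yy (σ m))) (ψ k (yy (σ n))) (ψ' (yy (σ n)))
    have t1 := abs_sub_le (ψ' (yy (σ m))) (ψ k (yy (σ m))) (ψ k (yy (σ n)))
    have k1 := key m
    have k2 := key n
    rw [abs_sub_comm] at k2
    linarith
  choose lim hlim using hCauchy
  have hadd : ∀ ψ₁ ψ₂ : StrongDual ℝ ↥Y, lim (ψ₁ + ψ₂) = lim ψ₁ + lim ψ₂ := by
    intro ψ₁ ψ₂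
    refine tendsto_nhds_unique (hlim (ψ₁ + ψ₂)) ?_
    have := (hlim ψ₁).add (hlim ψ₂)
    simpa [ContinuousLinearMap.add_apply] using this
  have hsmul : ∀ (c : ℝ) (ψ' : StrongDual ℝ ↥Y), lim (c • ψ') = c * lim ψ' := by
    intro c ψ'
    refine tendsto_nhds_unique (hlim (c • ψ')) ?_
    have := (hlim ψ').const_mul c
    simpa [ContinuousLinearMap.smul_apply, smul_eq_mul] using this
  have hbound : ∀ ψ' : StrongDual ℝ ↥Y, ‖lim ψ'‖ ≤ ‖ψ'‖ * C := by
    intro ψ'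
    refine le_of_tendsto (hlim ψ').norm (Eventually.of_forall fun n => ?_)
    exact le_trans ((ψ').le_opNorm _) (mul_le_mul_of_nonneg_left (hyynorm _) (norm_nonneg _))
  let Ξlin : StrongDual ℝ ↥Y →ₗ[ℝ] ℝ :=
    { toFun := lim, map_add' := hadd, map_smul' := fun c ψ' => by simpa using hsmul c ψ' }
  let Ξ : StrongDual ℝ (StrongDual ℝ ↥Y) := LinearMap.mkContinuous (𝕜 := ℝ) (𝕜₂ := ℝ) (E := StrongDual ℝ ↥Y) (F := ℝ)
    (σ := RingHom.id ℝ) Ξlin C (fun ψ' => by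
    simpa [Ξlin, mul_comm] using hbound ψ')
  obtain ⟨w, hw⟩ := hYrefl Ξ
  have hwψ : ∀ ψ' : StrongDual ℝ ↥Y, lim ψ' = ψ' w := by
    intro ψ'
    have := congrFun (congrArg DFunLike.coe hw) ψ'
    simpa [NormedSpace.inclusionInDoubleDual, NormedSpace.dual_def, Ξ, Ξlin] using this.symm
  refine ⟨σ, hσmono, (w : X), w.2, fun φ => ?_⟩
  have := hlim (φ.comp Y.subtypeL)
  rw [hwψ (φ.comp Y.subtypeL)] at this
  simpa using this

set_option maxHeartbeats 2000000 in
/-- Under (A1), (A2), (A4), (B1)–(B3), and assuming `X⁺` is a Hilbert space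
whose scalar product generates the norm, assumption (A5) holds: for every `u ∈ X∖X̃` there is
a unique nontrivial critical point `m̂(u) ∈ X̂(u)` of `J|_{X(u)}`, which is moreover the
unique global maximum of `J` on `X̂(u)`. -/
theorem A5_holds
    {X : Type*} [NormedAddCommGroup X] [NormedSpace ℝ X] [CompleteSpace X]
    -- X is reflexive
    (hrefl : Function.Surjective (NormedSpace.inclusionInDoubleDual ℝ X))
    -- topological direct sum decomposition X = X⁺ ⊕ X̃, with projection P onto X⁺ along X̃
    (Xp Xt : Submodule ℝ X)
    (hXpcl : IsClosed (Xp : Set X)) (hXtcl : IsClosed (Xt : Set X))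
    (P : X →L[ℝ] X)
    (hPm : ∀ x : X, P x ∈ Xp) (hQm : ∀ x : X, x - P x ∈ Xt)
    (hPp : ∀ x ∈ Xp, P x = x) (hPt : ∀ x ∈ Xt, P x = 0)
    -- ‖u‖² = ‖u⁺‖² + ‖ũ‖²
    (hnorm : ∀ x : X, ‖x‖ ^ 2 = ‖P x‖ ^ 2 + ‖x - P x‖ ^ 2)
    -- J, I of class C¹ with J(u) = ½‖u⁺‖² - I(u)
    (J I : X → ℝ) (J' I' : X → X →L[ℝ] ℝ)
    (hJd : ∀ x, HasFDerivAt J (J' x) x) (hJ'c : Continuous J')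
    (hId : ∀ x, HasFDerivAt I (I' x) x) (hI'c : Continuous I')
    (hJI : ∀ x : X, J x = (1 / 2) * ‖P x‖ ^ 2 - I x)
    -- X⁺ is a Hilbert space with ⟨u,u⟩ = ‖u‖² (parallelogram law on X⁺)
    (hpar : ∀ u ∈ Xp, ∀ v ∈ Xp, ‖u + v‖ ^ 2 + ‖u - v‖ ^ 2 = 2 * ‖u‖ ^ 2 + 2 * ‖v‖ ^ 2)
    -- (A1)
    (hI0 : I 0 = 0) (hIpos : ∀ x : X, 0 ≤ I x)
    -- (A2) : T-convergence implies liminf I(uₙ) ≥ I(v)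
    (hA2 : ∀ (u : ℕ → X) (v : X),
      Tendsto (fun n => P (u n)) atTop (𝓝 (P v)) →
      (∀ φ : X →L[ℝ] ℝ, Tendsto (fun n => φ (u n - P (u n))) atTop (𝓝 (φ (v - P v)))) →
      ∀ b : ℝ, b < I v → ∀ᶠ n in atTop, b < I (u n))
    -- (A4)
    (r a : ℝ) (hr : 0 < r)
    (ha_def : a = sInf (J '' {x : X | x ∈ Xp ∧ ‖x‖ = r})) (ha : 0 < a)
    -- (B1) : ‖u⁺‖ + I(u) → ∞ as ‖u‖ → ∞
    (hB1 : ∀ M : ℝ, ∃ R : ℝ, ∀ u : X, R ≤ ‖u‖ → M ≤ ‖P u‖ + I u)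
    -- (B2)
    (hB2 : ∀ (t : ℕ → ℝ) (u : ℕ → X) (w : X), w ∈ Xp → w ≠ 0 →
      Tendsto t atTop atTop → Tendsto (fun n => P (u n)) atTop (𝓝 w) →
      Tendsto (fun n => I (t n • u n) / (t n) ^ 2) atTop atTop)
    -- (B3)
    (hB3 : ∀ (u : X) (t : ℝ) (v : X), 0 ≤ t → v ∈ Xt → t • u + v ≠ u →
      ((t ^ 2 - 1) / 2) * I' u u + t * I' u v + I u - I (t • u + v) < 0)
    :
    ∀ u : X, u ∉ Xt →
      ∃ m : X,
        (∃ t : ℝ, 0 ≤ t ∧ ∃ v ∈ Xt, m = t • u + v) ∧ m ≠ 0 ∧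
        (∀ z : X, (∃ t : ℝ, ∃ v ∈ Xt, z = t • u + v) → J' m z = 0) ∧
        (∀ w : X, (∃ t : ℝ, 0 ≤ t ∧ ∃ v ∈ Xt, w = t • u + v) → w ≠ 0 →
          (∀ z : X, (∃ t : ℝ, ∃ v ∈ Xt, z = t • u + v) → J' w z = 0) → w = m) ∧
        (∀ w : X, (∃ t : ℝ, 0 ≤ t ∧ ∃ v ∈ Xt, w = t • u + v) → w ≠ m → J w < J m) := by

  intro u hu
  classical
  -- basic projection facts
  have hPu : P u ≠ 0 := by
    intro h
    exact hu (by simpa [h] using hQm u)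
  have hPunorm : (0:ℝ) < ‖P u‖ := norm_pos_iff.mpr hPu
  have hPdecomp : ∀ (t : ℝ) (v : X), v ∈ Xt → P (t • u + v) = t • P u := by
    intro t v hv
    rw [map_add, map_smul, hPt v hv, add_zero]
  -- inner product structure on Xp
  letI innerXp : InnerProductSpace ℝ ↥Xp := InnerProductSpace.ofNorm ℝ (fun x y => by
    have h := hpar (x : X) x.2 (y : X) y.2
    have e : ∀ z : ↥Xp, ‖z‖ = ‖(z : X)‖ := fun z => rfl
    rw [e (x + y), e (x - y), e x, e y]
    push_cast
    nlinarith [h])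
  set Pc : X →L[ℝ] ↥Xp := P.codRestrict Xp hPm with hPcdef
  have hPcnorm : ∀ x : X, ‖Pc x‖ = ‖P x‖ := fun x => rfl
  have keyJ' : ∀ m z : X, J' m z = ⟪Pc m, Pc z⟫ - I' m z := by
    intro m z
    have h1 : HasFDerivAt (fun x : X => ‖Pc x‖ ^ 2) ((2 • (innerSL ℝ (Pc m))).comp Pc) m :=
      (hasStrictFDerivAt_norm_sq (Pc m)).hasFDerivAt.comp m Pc.hasFDerivAt
    have h2 : HasFDerivAt (fun x : X => (1/2 : ℝ) * ‖Pc x‖ ^ 2 - I x)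
        (((1/2 : ℝ) • ((2 • (innerSL ℝ (Pc m))).comp Pc)) - I' m) m :=
      (h1.const_mul _).sub (hId m)
    have hfun : (fun x : X => (1/2 : ℝ) * ‖Pc x‖ ^ 2 - I x) = J := by
      funext x; rw [hJI x, hPcnorm x]
    rw [hfun] at h2
    have hJeq := (hJd m).unique h2
    rw [hJeq]
    simp only [ContinuousLinearMap.coe_sub', Pi.sub_apply, ContinuousLinearMap.coe_smul',
      Pi.smul_apply, ContinuousLinearMap.comp_apply, innerSL_apply_apply, smul_eq_mul,
      two_smul, ContinuousLinearMap.add_apply]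
    ring
  have hinner_self : ∀ x : X, ⟪Pc x, Pc x⟫ = ‖P x‖ ^ 2 := fun x => by
    rw [real_inner_self_eq_norm_sq, hPcnorm]
  have hinner_t : ∀ (m z : X), z ∈ Xt → ⟪Pc m, Pc z⟫ = 0 := by
    intro m z hz
    have : Pc z = 0 := Subtype.ext (by
      simp only [ContinuousLinearMap.coe_codRestrict_apply, Submodule.coe_zero, Pc]
      exact hPt z hz)
    rw [this, inner_zero_right]
  -- the set X̂(u) and associated values of J
  set Xhat : Set X := {w | ∃ t : ℝ, 0 ≤ t ∧ ∃ v ∈ Xt, w = t • u + v} with hXhatdef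
  -- critical points on X̂(u)∖{0} are strict global maxima
  have crit_max : ∀ m : X, m ∈ Xhat → m ≠ 0 →
      (∀ z : X, (∃ t : ℝ, ∃ v ∈ Xt, z = t • u + v) → J' m z = 0) →
      ∀ w : X, w ∈ Xhat → w ≠ m → J w < J m := by
    rintro m ⟨s, hs0, w₀, hw₀, rfl⟩ hm0 hcrit w ⟨t, ht0, v, hv, rfl⟩ hne
    have hsne : s ≠ 0 := by
      rintro rfl
      rw [zero_smul, zero_add] at hm0 hcrit hne
      have hIm : I' w₀ w₀ = 0 := by
        have h := hcrit w₀ ⟨0, w₀, hw₀, by rw [zero_smul, zero_add]⟩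
        rw [keyJ', hinner_t _ _ hw₀] at h
        linarith
      have hB := hB3 w₀ 0 0 le_rfl (Submodule.zero_mem _)
        (by rw [zero_smul, zero_add]; exact fun h => hm0 h.symm)
      simp only [zero_smul, zero_add, add_zero] at hB
      rw [hIm, hI0] at hB
      have := hIpos w₀
      norm_num at hB
      linarith
    have hs : 0 < s := lt_of_le_of_ne hs0 (Ne.symm hsne)
    set τ := t / s with hτ
    have hτ0 : 0 ≤ τ := div_nonneg ht0 hs0
    set vv := v - τ • w₀ with hvv
    have hvvt : vv ∈ Xt := Xt.sub_mem hv (Xt.smul_mem _ hw₀)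
    have hw : τ • (s • u + w₀) + vv = t • u + v := by
      rw [hvv, hτ]
      have h1 : (t / s) • (s • u) = t • u := by
        rw [smul_smul, div_mul_cancel₀ _ hsne]
      rw [smul_add, h1]
      abel
    have hnem : τ • (s • u + w₀) + vv ≠ s • u + w₀ := by rw [hw]; exact hne
    have hB := hB3 (s • u + w₀) τ vv hτ0 hvvt hnem
    have hIm : I' (s • u + w₀) (s • u + w₀) = ‖P (s • u + w₀)‖ ^ 2 := by
      have h := hcrit (s • u + w₀) ⟨s, w₀, hw₀, rfl⟩
      rw [keyJ', hinner_self] at h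
      linarith
    have hIv : I' (s • u + w₀) vv = 0 := by
      have h := hcrit vv ⟨0, vv, hvvt, by rw [zero_smul, zero_add]⟩
      rw [keyJ', hinner_t _ _ hvvt] at h
      linarith
    rw [hIm, hIv, hw] at hB
    have hPw : ‖P (t • u + v)‖ ^ 2 = τ ^ 2 * ‖P (s • u + w₀)‖ ^ 2 := by
      rw [hPdecomp t v hv, hPdecomp s w₀ hw₀, norm_smul, norm_smul, Real.norm_eq_abs,
        Real.norm_eq_abs, abs_of_nonneg ht0, abs_of_nonneg hs0, mul_pow, mul_pow, hτ, div_pow]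
      field_simp
    rw [hJI (t • u + v), hJI (s • u + w₀), hPw]
    nlinarith [hB]
  -- coercivity: no sequence in X̂(u) with J ≥ 0 can escape to infinity
  have no_escape : ∀ (w : ℕ → X) (t : ℕ → ℝ) (v : ℕ → X),
      (∀ n, 0 ≤ t n) → (∀ n, v n ∈ Xt) → (∀ n, w n = t n • u + v n) →
      (∀ n, 0 ≤ J (w n)) → Tendsto (fun n => ‖w n‖) atTop atTop → False := by
    intro w t v ht hv hw hJ0 hnorm_inf
    have hIle : ∀ n, I (w n) ≤ (1/2) * ‖P (w n)‖ ^ 2 := fun n => by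
      have := hJ0 n; rw [hJI] at this; linarith
    have hPI : Tendsto (fun n => ‖P (w n)‖ + I (w n)) atTop atTop := by
      rw [tendsto_atTop]
      intro M
      obtain ⟨R, hR⟩ := hB1 M
      filter_upwards [hnorm_inf.eventually_ge_atTop R] with n hn
      exact hR _ hn
    have hPinf : Tendsto (fun n => ‖P (w n)‖) atTop atTop := by
      rw [tendsto_atTop]
      intro M
      set M' := max M 0 with hM'
      filter_upwards [hPI.eventually_ge_atTop (M' + (1/2) * M' ^ 2 + 1)] with n hn
      by_contra hlt
      push_neg at hlt
      have hx0 : (0:ℝ) ≤ ‖P (w n)‖ := norm_nonneg _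
      have hMM : M ≤ M' := le_max_left _ _
      have hM0 : (0:ℝ) ≤ M' := le_max_right _ _
      have h1 := hIle n
      nlinarith [hn, h1]
    have hPwn : ∀ n, ‖P (w n)‖ = t n * ‖P u‖ := fun n => by
      rw [hw n, hPdecomp _ _ (hv n), norm_smul, Real.norm_eq_abs, abs_of_nonneg (ht n)]
    have htinf : Tendsto t atTop atTop := by
      have h2 : Tendsto (fun n => ‖P (w n)‖ / ‖P u‖) atTop atTop :=
        hPinf.atTop_div_const hPunorm
      refine h2.congr fun n => ?_
      rw [hPwn n, mul_div_cancel_right₀ _ hPunorm.ne']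
    set u' : ℕ → X := fun n => (t n)⁻¹ • w n with hu'
    have hPu' : Tendsto (fun n => P (u' n)) atTop (𝓝 (P u)) := by
      have hev : ∀ᶠ n in atTop, P u = P (u' n) := by
        filter_upwards [htinf.eventually_gt_atTop 0] with n hn
        rw [hu']
        simp only [map_smul]
        rw [hw n, hPdecomp _ _ (hv n), smul_smul, inv_mul_cancel₀ hn.ne', one_smul]
      exact tendsto_const_nhds.congr' hev
    have hB2' := hB2 t u' (P u) (hPm u) hPu htinf hPu'
    have hIeq : ∀ᶠ n in atTop, I (t n • u' n) / (t n) ^ 2 = I (w n) / (t n) ^ 2 := by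
      filter_upwards [htinf.eventually_gt_atTop 0] with n hn
      rw [hu', smul_inv_smul₀ hn.ne']
    have hcontr : ∀ᶠ n in atTop, I (w n) / (t n) ^ 2 ≤ (1/2) * ‖P u‖ ^ 2 := by
      filter_upwards [htinf.eventually_gt_atTop 0] with n hn
      have h1 := hIle n
      rw [hPwn n] at h1
      rw [div_le_iff₀ (by positivity)]
      nlinarith
    have hBig := (hB2'.congr' hIeq).eventually_ge_atTop ((1/2) * ‖P u‖ ^ 2 + 1)
    obtain ⟨n, h1, h2⟩ := (hBig.and hcontr).exists
    linarith
  -- the values of J on X̂(u)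
  set S : Set ℝ := J '' Xhat with hSdef
  have hSne : S.Nonempty :=
    ⟨J u, u, ⟨1, zero_le_one, 0, Xt.zero_mem, by rw [one_smul, add_zero]⟩, rfl⟩
  have hJle : ∀ x : X, J x ≤ (1/2) * ‖P‖ ^ 2 * ‖x‖ ^ 2 := by
    intro x
    rw [hJI]
    have h1 : ‖P x‖ ≤ ‖P‖ * ‖x‖ := P.le_opNorm x
    have h2 := hIpos x
    nlinarith [norm_nonneg (P x), norm_nonneg x, norm_nonneg P,
      mul_nonneg (norm_nonneg P) (norm_nonneg x)]
  have hbddS : BddAbove S := by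
    by_contra hbd
    rw [not_bddAbove_iff] at hbd
    have hseq : ∀ n : ℕ, ∃ wn : X, wn ∈ Xhat ∧ (n:ℝ) < J wn := by
      intro n
      obtain ⟨cc, hccS, hc⟩ := hbd (n:ℝ)
      obtain ⟨wn, hwn, rfl⟩ := hccS
      exact ⟨wn, hwn, hc⟩
    choose w hwX hwJ using hseq
    choose tt htt vv hvv hwdef using hwX
    have hJ0 : ∀ n, 0 ≤ J (w n) := fun n => le_trans (Nat.cast_nonneg n) (hwJ n).le
    have hnorm_inf : Tendsto (fun n => ‖w n‖) atTop atTop := by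
      rw [tendsto_atTop]
      intro B
      set B' := max B 0 with hB'
      obtain ⟨N, hN⟩ := exists_nat_ge ((1/2) * ‖P‖ ^ 2 * B' ^ 2)
      filter_upwards [eventually_ge_atTop N] with n hn
      by_contra hlt
      push_neg at hlt
      have hBB : B ≤ B' := le_max_left _ _
      have hB0 : (0:ℝ) ≤ B' := le_max_right _ _
      have h1 : J (w n) ≤ (1/2) * ‖P‖ ^ 2 * B' ^ 2 := by
        have h2 := hJle (w n)
        have hB2' : ‖w n‖ ≤ B' := le_trans hlt.le hBB
        have h5 : ‖w n‖ ^ 2 ≤ B' ^ 2 := by nlinarith [norm_nonneg (w n)]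
        have h6 : (1/2) * ‖P‖ ^ 2 * ‖w n‖ ^ 2 ≤ (1/2) * ‖P‖ ^ 2 * B' ^ 2 :=
          mul_le_mul_of_nonneg_left h5 (by positivity)
        linarith
      have h3 : (N:ℝ) ≤ (n:ℝ) := Nat.cast_le.mpr hn
      have h4 := hwJ n
      linarith
    exact no_escape w tt vv htt hvv hwdef hJ0 hnorm_inf
  set c := sSup S with hcdef
  have hac : a ≤ c := by
    have hptXt : (r / ‖P u‖) • (P u - u) ∈ Xt :=
      Xt.smul_mem _ (by simpa [neg_sub] using Xt.neg_mem (hQm u))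
    have hptXhat : (r / ‖P u‖) • u + (r / ‖P u‖) • (P u - u) ∈ Xhat :=
      ⟨r / ‖P u‖, by positivity, _, hptXt, rfl⟩
    have hpteq : (r / ‖P u‖) • u + (r / ‖P u‖) • (P u - u) = (r / ‖P u‖) • P u := by
      module
    have hptXp : (r / ‖P u‖) • u + (r / ‖P u‖) • (P u - u) ∈ Xp := by
      rw [hpteq]; exact Xp.smul_mem _ (hPm u)
    have hptnorm : ‖(r / ‖P u‖) • u + (r / ‖P u‖) • (P u - u)‖ = r := by
      rw [hpteq, norm_smul, Real.norm_eq_abs, abs_of_nonneg (by positivity),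
        div_mul_cancel₀ _ hPunorm.ne']
    have hSr : J ((r / ‖P u‖) • u + (r / ‖P u‖) • (P u - u)) ∈
        J '' {x : X | x ∈ Xp ∧ ‖x‖ = r} := ⟨_, ⟨hptXp, hptnorm⟩, rfl⟩
    have hbb : BddBelow (J '' {x : X | x ∈ Xp ∧ ‖x‖ = r}) := by
      by_contra hb
      rw [ha_def, Real.sInf_of_not_bddBelow hb] at ha
      exact lt_irrefl _ ha
    have h1 : a ≤ J ((r / ‖P u‖) • u + (r / ‖P u‖) • (P u - u)) := by
      rw [ha_def]; exact csInf_le hbb hSr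
    have h2 : J ((r / ‖P u‖) • u + (r / ‖P u‖) • (P u - u)) ≤ c :=
      le_csSup hbddS ⟨_, hptXhat, rfl⟩
    linarith
  have hcpos : 0 < c := lt_of_lt_of_le ha hac
  -- maximizing sequence
  obtain ⟨cs, hcsmono, hcs_t, hcs_mem⟩ := exists_seq_tendsto_sSup hSne hbddS
  choose w0 hw0X hw0J using hcs_mem
  have hJw0 : Tendsto (fun n => J (w0 n)) atTop (𝓝 c) :=
    hcs_t.congr fun n => (hw0J n).symm
  obtain ⟨N₀, hN₀⟩ := eventually_atTop.mp (hJw0.eventually_const_le (by linarith : c/2 < c))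
  set w1 : ℕ → X := fun n => w0 (n + N₀) with hw1
  have hw1X : ∀ n, w1 n ∈ Xhat := fun n => hw0X _
  have hw1J0 : ∀ n, 0 ≤ J (w1 n) := fun n =>
    le_trans (by linarith) (hN₀ (n + N₀) (Nat.le_add_left _ _))
  have hJw1 : Tendsto (fun n => J (w1 n)) atTop (𝓝 c) :=
    hJw0.comp (tendsto_add_atTop_nat N₀)
  choose t1 ht1 v1 hv1 hw1def using hw1X
  -- boundedness of the maximizing sequence
  have hbnd : ∃ C : ℝ, 0 ≤ C ∧ ∀ n, ‖w1 n‖ ≤ C := by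
    by_contra hC
    push_neg at hC
    have hsel : ∀ B : ℕ, ∃ n, (B:ℝ) < ‖w1 n‖ := fun B => hC B (Nat.cast_nonneg B)
    choose φ hφ using hsel
    refine no_escape (fun n => w1 (φ n)) (fun n => t1 (φ n)) (fun n => v1 (φ n))
      (fun n => ht1 _) (fun n => hv1 _) (fun n => hw1def _) (fun n => hw1J0 _) ?_
    rw [tendsto_atTop]
    intro B
    obtain ⟨N, hN⟩ := exists_nat_ge B
    filter_upwards [eventually_ge_atTop N] with n hn
    calc B ≤ (N:ℝ) := hN
      _ ≤ (n:ℝ) := Nat.cast_le.mpr hn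
      _ ≤ ‖w1 (φ n)‖ := (hφ n).le
  obtain ⟨C, hC0, hCb⟩ := hbnd
  -- extract convergent t-subsequence
  have ht1mem : ∀ n, t1 n ∈ Set.Icc (0:ℝ) (‖P‖ * C / ‖P u‖) := by
    intro n
    refine ⟨ht1 n, ?_⟩
    have h1 : ‖P (w1 n)‖ = t1 n * ‖P u‖ := by
      rw [hw1def n, hPdecomp _ _ (hv1 n), norm_smul, Real.norm_eq_abs, abs_of_nonneg (ht1 n)]
    have h2 : ‖P (w1 n)‖ ≤ ‖P‖ * C :=
      le_trans (P.le_opNorm _) (mul_le_mul_of_nonneg_left (hCb n) (norm_nonneg _))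
    rw [h1] at h2
    rw [le_div_iff₀ hPunorm]
    linarith
  obtain ⟨t₀, ht₀mem, σ₁, hσ₁, ht₀conv⟩ := isCompact_Icc.tendsto_subseq ht1mem
  -- weak subsequential limit of the tilde parts
  set vt : ℕ → X := fun n => w1 (σ₁ n) - P (w1 (σ₁ n)) with hvtdef
  have hvtXt : ∀ n, vt n ∈ Xt := fun n => hQm _
  have hvtb : ∀ n, ‖vt n‖ ≤ C + ‖P‖ * C := by
    intro n
    calc ‖vt n‖ ≤ ‖w1 (σ₁ n)‖ + ‖P (w1 (σ₁ n))‖ := norm_sub_le _ _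
      _ ≤ C + ‖P‖ * C := add_le_add (hCb _)
          (le_trans (P.le_opNorm _) (mul_le_mul_of_nonneg_left (hCb _) (norm_nonneg _)))
  obtain ⟨σ₂, hσ₂, vstar, hvmem, hweak⟩ :=
    aux_wsc hrefl vt (C + ‖P‖ * C) (by positivity) hvtb
  have hvstarXt : vstar ∈ Xt := by
    have hle : (Submodule.span ℝ (Set.range vt)).topologicalClosure ≤ Xt :=
      Submodule.topologicalClosure_minimal _
        (Submodule.span_le.mpr (by rintro _ ⟨n, rfl⟩; exact hvtXt n)) hXtcl
    exact hle hvmem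
  -- the limit point m
  set m : X := t₀ • u + (vstar - t₀ • (u - P u)) with hmdef
  have hmXt : vstar - t₀ • (u - P u) ∈ Xt := Xt.sub_mem hvstarXt (Xt.smul_mem _ (hQm u))
  have hmXhat : m ∈ Xhat := ⟨t₀, ht₀mem.1, _, hmXt, hmdef⟩
  have hPmm : P m = t₀ • P u := hPdecomp _ _ hmXt
  set W : ℕ → X := fun n => w1 (σ₁ (σ₂ n)) with hWdef
  have hT : Tendsto (fun n => t1 (σ₁ (σ₂ n))) atTop (𝓝 t₀) :=
    ht₀conv.comp hσ₂.tendsto_atTop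
  have hPW : Tendsto (fun n => P (W n)) atTop (𝓝 (P m)) := by
    rw [hPmm]
    have h1 : ∀ n, P (W n) = t1 (σ₁ (σ₂ n)) • P u := fun n => by
      show P (w1 (σ₁ (σ₂ n))) = _
      rw [hw1def (σ₁ (σ₂ n)), hPdecomp _ _ (hv1 _)]
    exact (hT.smul_const (P u)).congr fun n => (h1 n).symm
  have hweak' : ∀ φ : X →L[ℝ] ℝ,
      Tendsto (fun n => φ (W n - P (W n))) atTop (𝓝 (φ (m - P m))) := by
    intro φ
    have h1 : m - P m = vstar := by rw [hmdef, hPmm]; module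
    rw [h1]
    exact hweak φ
  have hA2' := hA2 W m hPW hweak'
  have hJW : Tendsto (fun n => J (W n)) atTop (𝓝 c) :=
    hJw1.comp (hσ₁.tendsto_atTop.comp hσ₂.tendsto_atTop)
  have hIW : Tendsto (fun n => I (W n)) atTop (𝓝 ((1/2) * ‖P m‖ ^ 2 - c)) := by
    have h1 : Tendsto (fun n => (1/2) * ‖P (W n)‖ ^ 2 - J (W n)) atTop
        (𝓝 ((1/2) * ‖P m‖ ^ 2 - c)) := (((hPW.norm).pow 2).const_mul _).sub hJW
    exact h1.congr fun n => by rw [hJI (W n)]; ring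
  have hImle : I m ≤ (1/2) * ‖P m‖ ^ 2 - c := by
    by_contra hgt
    push_neg at hgt
    set b := ((1/2) * ‖P m‖ ^ 2 - c + I m) / 2 with hb
    have hb1 : b < I m := by rw [hb]; linarith
    have hb2 : (1/2) * ‖P m‖ ^ 2 - c < b := by rw [hb]; linarith
    have he1 := hA2' b hb1
    obtain ⟨n, h1, h2⟩ := (he1.and (hIW.eventually_lt_const hb2)).exists
    linarith
  have hJmge : c ≤ J m := by rw [hJI m]; linarith
  have hJmle : J m ≤ c := le_csSup hbddS ⟨m, hmXhat, rfl⟩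
  have hJm : J m = c := le_antisymm hJmle hJmge
  have hJ00 : J (0:X) = 0 := by rw [hJI 0]; simp [hI0]
  have hm0 : m ≠ 0 := by
    intro h
    rw [h, hJ00] at hJm
    linarith
  have ht₀pos : 0 < t₀ := by
    rcases lt_or_eq_of_le ht₀mem.1 with h | h
    · exact h
    · exfalso
      have hPm0 : P m = 0 := by rw [hPmm, ← h, zero_smul]
      have hJm0 : J m ≤ 0 := by
        rw [hJI m, hPm0]
        simp only [norm_zero]
        have := hIpos m
        nlinarith
      linarith
  -- criticality of m
  have hcrit : ∀ z : X, (∃ t : ℝ, ∃ v ∈ Xt, z = t • u + v) → J' m z = 0 := by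
    rintro z ⟨α, vz, hvz, rfl⟩
    have hline : HasDerivAt (fun s' : ℝ => m + s' • (α • u + vz)) (α • u + vz) 0 := by
      simpa using ((hasDerivAt_id (0:ℝ)).smul_const (α • u + vz)).const_add m
    have h0pt : m + (0:ℝ) • (α • u + vz) = m := by rw [zero_smul, add_zero]
    have hJat : HasFDerivAt J (J' m) (m + (0:ℝ) • (α • u + vz)) := by
      rw [h0pt]; exact hJd m
    have hg : HasDerivAt (fun s' : ℝ => J (m + s' • (α • u + vz)))
        (J' m (α • u + vz)) 0 := hJat.comp_hasDerivAt 0 hline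
    set δ := if α = 0 then (1:ℝ) else t₀ / |α| with hδdef
    have hδpos : 0 < δ := by
      rw [hδdef]; split_ifs with h
      · norm_num
      · exact div_pos ht₀pos (abs_pos.mpr h)
    have hmaxloc : IsLocalMax (fun s' : ℝ => J (m + s' • (α • u + vz))) 0 := by
      have hev : ∀ᶠ s' in 𝓝 (0:ℝ),
          J (m + s' • (α • u + vz)) ≤ J (m + (0:ℝ) • (α • u + vz)) := by
        rw [Metric.eventually_nhds_iff]
        refine ⟨δ, hδpos, fun s' hs' => ?_⟩
        rw [h0pt]
        have hsd : |s'| < δ := by simpa [Real.dist_eq] using hs'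
        have htnn : 0 ≤ t₀ + s' * α := by
          by_cases h : α = 0
          · simp [h]; exact ht₀pos.le
          · rw [hδdef, if_neg h] at hsd
            have habs : |s' * α| < t₀ := by
              rw [abs_mul]
              calc |s'| * |α| < (t₀ / |α|) * |α| :=
                    mul_lt_mul_of_pos_right hsd (abs_pos.mpr h)
                _ = t₀ := div_mul_cancel₀ _ (abs_pos.mpr h).ne'
            have := neg_abs_le (s' * α)
            linarith
        have hmem : m + s' • (α • u + vz) ∈ Xhat := by
          refine ⟨t₀ + s' * α, htnn,
            (vstar - t₀ • (u - P u)) + s' • vz, Xt.add_mem hmXt (Xt.smul_mem _ hvz), ?_⟩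
          rw [hmdef]; module
        have hle := le_csSup hbddS ⟨_, hmem, rfl⟩
        calc J (m + s' • (α • u + vz)) ≤ c := hle
          _ = J m := hJm.symm
      exact hev
    exact hmaxloc.hasDerivAt_eq_zero hg
  -- conclusion
  refine ⟨m, ⟨t₀, ht₀mem.1, _, hmXt, hmdef⟩, hm0, hcrit, ?_, ?_⟩
  · intro w hwhat hw0 hwcrit
    by_contra hne
    have h1 := crit_max w hwhat hw0 hwcrit m hmXhat (fun h => hne h.symm)
    have h2 := crit_max m hmXhat hm0 hcrit w hwhat hne
    linarith
  · exact crit_max m hmXhat hm0 hcrit
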